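/- The category of finite meet-semilattices with top element is self-dual: there is an equivalence MSL_f^op ≃ MSL_f sending a finite meet-semilattice M to the semilattice of its filters (with semilattice structure defined pointwise via filters-as-maps M → 2). -/

import Mathlib

open CategoryTheory Opposite

/-- The category of finite meet-semilattices with a top element (and top- and
meet-preserving maps). -/
def FinSemilatInf := ObjectProperty.FullSubcategory (fun X : SemilatInfCat => Finite X)

instance : Category FinSemilatInf := ObjectProperty.FullSubcategory.category _

/-- A filter on a meet-semilattice with top: a nonempty, upward-closed subset that is
closed under binary meets. -/
def IsSemilatticeFilter {M : Type*} [SemilatticeInf M] [OrderTop M] (F : Set M) : Prop :=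
  F.Nonempty ∧ (∀ x ∈ F, ∀ y, x ≤ y → y ∈ F) ∧ ∀ x ∈ F, ∀ y ∈ F, x ⊓ y ∈ F

namespace FinSemilatInfDual

variable {M N : Type*} [SemilatticeInf M] [OrderTop M] [SemilatticeInf N] [OrderTop N]

/-- The type of filters on `M`. -/
def Filt (M : Type*) [SemilatticeInf M] [OrderTop M] : Type _ :=
  {F : Set M // IsSemilatticeFilter F}

instance : PartialOrder (Filt M) := inferInstanceAs (PartialOrder {_F : Set M // _})

lemma mem_top_of_filter {F : Set M} (h : IsSemilatticeFilter F) : (⊤ : M) ∈ F := by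
  obtain ⟨x, hx⟩ := h.1
  exact h.2.1 x hx ⊤ le_top

lemma le_iff {F G : Filt M} : F ≤ G ↔ F.1 ⊆ G.1 := Iff.rfl

instance : SemilatticeInf (Filt M) :=
  { (inferInstance : PartialOrder (Filt M)) with
    inf := fun F G => ⟨F.1 ∩ G.1,
      ⟨⟨⊤, mem_top_of_filter F.2, mem_top_of_filter G.2⟩,
       fun x hx y hxy => ⟨F.2.2.1 x hx.1 y hxy, G.2.2.1 x hx.2 y hxy⟩,
       fun x hx y hy => ⟨F.2.2.2 x hx.1 y hy.1, G.2.2.2 x hx.2 y hy.2⟩⟩⟩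
    inf_le_left := fun F _G => (Set.inter_subset_left : _ ⊆ F.1)
    inf_le_right := fun _F G => (Set.inter_subset_right : _ ⊆ G.1)
    le_inf := fun _ _ _ h1 h2 => Set.subset_inter (le_iff.1 h1) (le_iff.1 h2) }

instance : OrderTop (Filt M) where
  top := ⟨Set.univ, ⟨⟨⊤, trivial⟩, fun _ _ _ _ => trivial, fun _ _ _ _ => trivial⟩⟩
  le_top _F := Set.subset_univ _

instance [Finite M] : Finite (Filt M) := inferInstanceAs (Finite {_F : Set M // _})

lemma monotone_of_infTopHom (f : InfTopHom M N) : Monotone f := fun x y h => by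
  have : f (x ⊓ y) = f x ⊓ f y := map_inf f x y
  rw [inf_eq_left.2 h] at this
  exact inf_eq_left.1 this.symm

/-- Preimage of a filter under an inf-top hom. -/
def filtMap (f : InfTopHom M N) : InfTopHom (Filt N) (Filt M) where
  toFun F := ⟨f ⁻¹' F.1,
    ⟨⟨⊤, by simp only [Set.mem_preimage, map_top]; exact mem_top_of_filter F.2⟩,
     fun x hx y hxy => F.2.2.1 (f x) hx (f y) (monotone_of_infTopHom f hxy),
     fun x hx y hy => by
       simp only [Set.mem_preimage, map_inf]
       exact F.2.2.2 (f x) hx (f y) hy⟩⟩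
  map_inf' F G := rfl
  map_top' := Subtype.ext (Set.eq_univ_of_forall fun _ => trivial)

/-- The unit map `M → Filt (Filt M)`. -/
def unitHom (M : Type*) [SemilatticeInf M] [OrderTop M] : InfTopHom M (Filt (Filt M)) where
  toFun m := ⟨{F : Filt M | m ∈ F.1},
    ⟨⟨⊤, trivial⟩,
     fun F hF _G hFG => hFG hF,
     fun F hF G hG => Set.mem_inter hF hG⟩⟩
  map_inf' x y := Subtype.ext <| Set.ext fun F => by
    constructor
    · intro h
      exact ⟨F.2.2.1 _ h x inf_le_left, F.2.2.1 _ h y inf_le_right⟩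
    · intro h
      exact F.2.2.2 x h.1 y h.2
  map_top' := Subtype.ext <| Set.ext fun F =>
    ⟨fun _ => trivial, fun _ => mem_top_of_filter F.2⟩

/-- The principal filter. -/
def princ (m : M) : Filt M :=
  ⟨{x | m ≤ x}, ⟨⟨m, le_rfl⟩, fun _x hx _y hxy => hx.trans hxy, fun _x hx _y hy => le_inf hx hy⟩⟩

lemma exists_min [Finite M] (F : Filt M) : ∃ m ∈ F.1, ∀ x ∈ F.1, m ≤ x := by
  have hfin : F.1.Finite := Set.toFinite _
  have hne : hfin.toFinset.Nonempty := by
    rw [Set.Finite.toFinset_nonempty]; exact F.2.1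
  refine ⟨hfin.toFinset.inf' hne id, ?_, ?_⟩
  · exact Finset.inf'_mem F.1 F.2.2.2 _ hne id (fun i hi => hfin.mem_toFinset.1 hi)
  · intro x hx
    exact Finset.inf'_le id (hfin.mem_toFinset.2 hx)

lemma unitHom_bijective (M : Type*) [SemilatticeInf M] [OrderTop M] [Finite M] :
    Function.Bijective (unitHom M) := by
  constructor
  · intro x y h
    have hx : y ∈ (princ x).1 := by
      have : princ x ∈ (unitHom M x).1 := le_rfl
      rw [h] at this
      exact this
    have hy : x ∈ (princ y).1 := by
      have : princ y ∈ (unitHom M y).1 := le_rfl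
      rw [← h] at this
      exact this
    exact le_antisymm hx hy
  · intro 𝔉
    obtain ⟨F₀, hF₀mem, hF₀min⟩ := exists_min 𝔉
    obtain ⟨m, hm, hmin⟩ := exists_min F₀
    refine ⟨m, Subtype.ext (Set.ext fun G => ?_)⟩
    constructor
    · intro (hG : m ∈ G.1)
      have : F₀ ≤ G := fun x hx => G.2.2.1 m hG x (hmin x hx)
      exact 𝔉.2.2.1 F₀ hF₀mem G this
    · intro hG
      exact hF₀min G hG hm

lemma unitHom_le_iff {x y : M} : unitHom M x ≤ unitHom M y ↔ x ≤ y := by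
  constructor
  · intro h
    have hx : princ x ∈ (unitHom M x).1 := (le_rfl : x ≤ x)
    exact h hx
  · intro h F (hF : x ∈ F.1)
    exact F.2.2.1 x hF y h

/-- The self-duality functor on objects. -/
def dObj (M : FinSemilatInf) : FinSemilatInf :=
  haveI : Finite M.obj := M.property
  ⟨SemilatInfCat.of (Filt M.obj), inferInstanceAs (Finite (Filt M.obj))⟩

/-- The self-duality functor. -/
def D : FinSemilatInfᵒᵖ ⥤ FinSemilatInf where
  obj X := dObj X.unop
  map {X Y} f := ObjectProperty.homMk (filtMap f.unop.hom : InfTopHom (Filt X.unop.obj) (Filt Y.unop.obj))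
  map_id X := ObjectProperty.hom_ext _ (InfTopHom.ext fun F => Subtype.ext rfl)
  map_comp {X Y Z} f g := ObjectProperty.hom_ext _ (InfTopHom.ext fun F => Subtype.ext rfl)

/-- Inverse direction. -/
def Dinv : FinSemilatInf ⥤ FinSemilatInfᵒᵖ where
  obj M := op (dObj M)
  map {X Y} f := Quiver.Hom.op (ObjectProperty.homMk (filtMap f.hom : InfTopHom (Filt Y.obj) (Filt X.obj)))
  map_id X := Quiver.Hom.unop_inj (ObjectProperty.hom_ext _ (InfTopHom.ext fun F => Subtype.ext rfl))
  map_comp {X Y Z} f g := Quiver.Hom.unop_inj (ObjectProperty.hom_ext _ (InfTopHom.ext fun F => Subtype.ext rfl))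

/-- The unit order isomorphism. -/
noncomputable def unitOrderIso (M : Type*) [SemilatticeInf M] [OrderTop M] [Finite M] :
    M ≃o Filt (Filt M) where
  toEquiv := Equiv.ofBijective _ (unitHom_bijective M)
  map_rel_iff' := unitHom_le_iff

/-- The unit isomorphism at an object, as an iso in `FinSemilatInf`. -/
noncomputable def unitIso (M : FinSemilatInf) : M ≅ dObj (dObj M) := by
  haveI : Finite M.obj := M.property
  exact
    { hom := ObjectProperty.homMk (unitHom M.obj)
      inv := ObjectProperty.homMk
        ({ toFun := (unitOrderIso M.obj).symm
           map_inf' := fun a b => ((unitOrderIso M.obj).symm.map_inf a b : _)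
           map_top' := (unitOrderIso M.obj).symm.map_top } : InfTopHom (Filt (Filt M.obj)) M.obj)
      hom_inv_id := ObjectProperty.hom_ext _ (InfTopHom.ext fun x => (unitOrderIso M.obj).symm_apply_apply x)
      inv_hom_id := ObjectProperty.hom_ext _ (InfTopHom.ext fun F => (unitOrderIso M.obj).apply_symm_apply F) }

lemma unit_natural {X Y : FinSemilatInf} (f : X ⟶ Y) :
    f ≫ (unitIso Y).hom = (unitIso X).hom ≫ (Dinv ⋙ D).map f :=
  ObjectProperty.hom_ext _ (InfTopHom.ext fun _m => Subtype.ext rfl)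

lemma unit_natural' {X Y : FinSemilatInf} (f : X ⟶ Y) :
    (Dinv ⋙ D).map f ≫ (unitIso Y).inv = (unitIso X).inv ≫ f := by
  haveI : Finite X.obj := X.property
  haveI : Finite Y.obj := Y.property
  refine ObjectProperty.hom_ext _ (InfTopHom.ext fun F => (unitOrderIso Y.obj).injective ?_)
  show unitOrderIso Y.obj ((unitOrderIso Y.obj).symm ((filtMap (filtMap f.hom)) F))
    = unitOrderIso Y.obj (f.hom ((unitOrderIso X.obj).symm F))
  rw [OrderIso.apply_symm_apply]
  conv_lhs => rw [← (unitOrderIso X.obj).apply_symm_apply F]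
  rfl

/-- The self-duality equivalence (within one universe). -/
noncomputable def E : FinSemilatInfᵒᵖ ≌ FinSemilatInf :=
  CategoryTheory.Equivalence.mk D Dinv
    (NatIso.ofComponents
      (fun X => ((unitIso X.unop).op : op (dObj (dObj X.unop)) ≅ op X.unop).symm)
      (by
        intro X Y f
        apply Quiver.Hom.unop_inj
        exact (unit_natural' f.unop).symm))
    (NatIso.ofComponents
      (fun M => (unitIso M).symm)
      (fun f => unit_natural' f))

section Shrinking

universe w v u

variable (α : Type v) [SemilatticeInf α] [OrderTop α] [Small.{w} α]

noncomputable instance : SemilatticeInf (Shrink.{w} α) where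
  le x y := (equivShrink α).symm x ≤ (equivShrink α).symm y
  lt x y := (equivShrink α).symm x < (equivShrink α).symm y
  lt_iff_le_not_ge _ _ := lt_iff_le_not_ge
  le_refl _ := le_refl _
  le_trans _ _ _ := le_trans
  le_antisymm x y h1 h2 := (equivShrink α).symm.injective (le_antisymm h1 h2)
  inf x y := equivShrink α ((equivShrink α).symm x ⊓ (equivShrink α).symm y)
  inf_le_left x y := by
    show (equivShrink α).symm (equivShrink α _) ≤ _
    rw [Equiv.symm_apply_apply]
    exact inf_le_left
  inf_le_right x y := by
    show (equivShrink α).symm (equivShrink α _) ≤ _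
    rw [Equiv.symm_apply_apply]
    exact inf_le_right
  le_inf x y z h1 h2 := by
    show _ ≤ (equivShrink α).symm (equivShrink α _)
    rw [Equiv.symm_apply_apply]
    exact le_inf h1 h2

noncomputable instance : OrderTop (Shrink.{w} α) where
  top := equivShrink α ⊤
  le_top x := by
    show _ ≤ (equivShrink α).symm (equivShrink α ⊤)
    rw [Equiv.symm_apply_apply]
    exact le_top

/-- The canonical order isomorphism from `Shrink α` to `α`. -/
noncomputable def shrinkIso : Shrink.{w} α ≃o α where
  toEquiv := (equivShrink α).symm
  map_rel_iff' := Iff.rfl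

variable {α}

/-- An order isomorphism as an inf-top hom. -/
def ordToHom {A : Type*} {B : Type*} [SemilatticeInf A] [OrderTop A] [SemilatticeInf B]
    [OrderTop B] (e : A ≃o B) : InfTopHom A B :=
  ⟨⟨e, fun a b => e.map_inf a b⟩, e.map_top⟩

@[simp] lemma ordToHom_apply {A : Type*} {B : Type*} [SemilatticeInf A] [OrderTop A]
    [SemilatticeInf B] [OrderTop B] (e : A ≃o B) (a : A) : ordToHom e a = e a := rfl

/-- An order isomorphism of carriers gives an isomorphism in `FinSemilatInf`. -/
def isoOfOrderIso {X Y : FinSemilatInf} (e : X.obj ≃o Y.obj) : X ≅ Y where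
  hom := ObjectProperty.homMk (ordToHom e)
  inv := ObjectProperty.homMk (ordToHom e.symm)
  hom_inv_id := ObjectProperty.hom_ext _ (InfTopHom.ext fun x => e.symm_apply_apply x)
  inv_hom_id := ObjectProperty.hom_ext _ (InfTopHom.ext fun x => e.apply_symm_apply x)

/-- Conjugating an inf-top hom by order isomorphisms. -/
def conjHom {A α' B β' : Type*} [SemilatticeInf A] [OrderTop A] [SemilatticeInf α']
    [OrderTop α'] [SemilatticeInf B] [OrderTop B] [SemilatticeInf β'] [OrderTop β']
    (e1 : A ≃o α') (e2 : B ≃o β') (f : InfTopHom α' β') : InfTopHom A B where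
  toFun a := e2.symm (f (e1 a))
  map_inf' a b := by rw [e1.map_inf, map_inf, e2.symm.map_inf]
  map_top' := by rw [e1.map_top, map_top, e2.symm.map_top]

@[simp] lemma conjHom_apply {A α' B β' : Type*} [SemilatticeInf A] [OrderTop A]
    [SemilatticeInf α'] [OrderTop α'] [SemilatticeInf B] [OrderTop B] [SemilatticeInf β']
    [OrderTop β'] (e1 : A ≃o α') (e2 : B ≃o β') (f : InfTopHom α' β') (a : A) :
    conjHom e1 e2 f a = e2.symm (f (e1 a)) := rfl

/-- A morphism of `FinSemilatInf` as an `InfTopHom`. -/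
def appHom {X Y : FinSemilatInf} (f : X ⟶ Y) : InfTopHom X.obj Y.obj := f.hom

/-- Shrinking an object of `FinSemilatInf` into another universe. -/
noncomputable def sObj (M : FinSemilatInf.{v}) : FinSemilatInf.{w} :=
  haveI : Finite M.obj := M.property
  ⟨SemilatInfCat.of (Shrink.{w} M.obj), Finite.of_equiv _ (equivShrink.{w} M.obj)⟩

/-- The order iso from a shrunk object to the original. -/
noncomputable def sIso (M : FinSemilatInf.{v}) : (sObj.{w} M).obj ≃o M.obj :=
  haveI : Finite M.obj := M.property
  shrinkIso.{w} M.obj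

/-- The universe-shrinking functor. -/
noncomputable def shF : FinSemilatInf.{v} ⥤ FinSemilatInf.{w} where
  obj := sObj.{w}
  map {X Y} f := ObjectProperty.homMk (conjHom (sIso X) (sIso Y) f.hom)
  map_id X := ObjectProperty.hom_ext _ <| InfTopHom.ext fun a => by
    show (sIso X).symm ((sIso X) a) = a
    exact (sIso X).symm_apply_apply a
  map_comp {X Y Z} f g := ObjectProperty.hom_ext _ <| InfTopHom.ext fun a => by
    show (sIso Z).symm ((appHom g) ((appHom f) ((sIso X) a)))
      = (sIso Z).symm ((appHom g) ((sIso Y) ((sIso Y).symm ((appHom f) ((sIso X) a)))))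
    rw [OrderIso.apply_symm_apply]

/-- The universe-shrinking equivalence. -/
noncomputable def shE : FinSemilatInf.{v} ≌ FinSemilatInf.{w} :=
  CategoryTheory.Equivalence.mk shF.{w, v} shF.{v, w}
    (NatIso.ofComponents
      (fun X => isoOfOrderIso ((sIso.{v} (sObj.{w} X)).trans (sIso X)).symm)
      (by
        intro X Y f
        refine ObjectProperty.hom_ext _ (InfTopHom.ext fun a => ?_)
        show ((sIso.{v} (sObj.{w} Y)).trans (sIso Y)).symm ((appHom f) a)
          = (sIso.{v} (sObj.{w} Y)).symm ((sIso Y).symm ((appHom f) ((sIso X)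
              ((sIso.{v} (sObj.{w} X)) (((sIso.{v} (sObj.{w} X)).trans (sIso X)).symm a)))))
        simp only [OrderIso.symm_trans_apply, OrderIso.apply_symm_apply]))
    (NatIso.ofComponents
      (fun X => isoOfOrderIso ((sIso.{w} (sObj.{v} X)).trans (sIso X)))
      (by
        intro X Y f
        refine ObjectProperty.hom_ext _ (InfTopHom.ext fun a => ?_)
        show ((sIso.{w} (sObj.{v} Y)).trans (sIso Y))
            ((sIso.{w} (sObj.{v} Y)).symm ((sIso Y).symm ((appHom f)
              ((sIso X) ((sIso.{w} (sObj.{v} X)) a)))))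
          = (appHom f) (((sIso.{w} (sObj.{v} X)).trans (sIso X)) a)
        simp only [OrderIso.trans_apply, OrderIso.apply_symm_apply]
        rfl))

end Shrinking

end FinSemilatInfDual

theorem finSemilatInf_self_dual :
    ∃ E : FinSemilatInfᵒᵖ ≌ FinSemilatInf,
      ∀ M : FinSemilatInf,
        Nonempty (((E.functor.obj (op M)).obj : Type) ≃o
          {F : Set M.obj // IsSemilatticeFilter F}) := by
  refine ⟨FinSemilatInfDual.E.trans FinSemilatInfDual.shE, fun M => ⟨?_⟩⟩
  exact (FinSemilatInfDual.sIso _).trans { toEquiv := Equiv.refl _, map_rel_iff' := Iff.rfl }
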